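/- Let Ω = I × J ⊆ ℝ² be a product of open intervals with 0 ∉ I, with coordinates (q₁,q₂), and let ξ₁, ξ₂ : Ω → ℝ be smooth functions satisfying on all of Ω: ξ₁q₂ + ξ₂q₁ = 0, ∂ξ₂/∂q₁ = 0, ∂ξ₁/∂q₂ = 0, and ξ₁ + q₁·∂ξ₁/∂q₁ + q₁·∂ξ₂/∂q₂ = 0. Then ξ₁ ≡ 0 and ξ₂ ≡ 0 on Ω. (Consequently, the Lagrangian system ∫₀ᵀ(q₁u₁u₂ + q₁q₂)dt → extr, q̇₁ = u₁, q̇₂ = u₂ admits only the trivial infinitesimal symmetry leaving both the control vector field and the Lagrangian invariant.) -/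

import Mathlib

open Set

/-- The system of PDEs for infinitesimal symmetries of the Lagrangian system
`∫(q₁u₁u₂ + q₁q₂)dt → extr`, `q̇₁ = u₁, q̇₂ = u₂` has only the trivial
solution: if, on a product `Ω = I × J` of open intervals with `0 ∉ I`, smooth
`ξ₁, ξ₂` satisfy `ξ₁q₂ + ξ₂q₁ = 0`, `∂ξ₂/∂q₁ = 0`, `∂ξ₁/∂q₂ = 0` and
`ξ₁ + q₁·∂ξ₁/∂q₁ + q₁·∂ξ₂/∂q₂ = 0`, then `ξ₁ ≡ 0` and `ξ₂ ≡ 0` on `Ω`. -/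
theorem stmt12 (I J : Set ℝ)
    (hIopen : IsOpen I) (hJopen : IsOpen J)
    (hIconn : I.OrdConnected) (hJconn : J.OrdConnected)
    (hI0 : (0 : ℝ) ∉ I)
    (ξ₁ ξ₂ : ℝ × ℝ → ℝ)
    (hξ₁ : ContDiffOn ℝ (⊤ : ℕ∞) ξ₁ (I ×ˢ J))
    (hξ₂ : ContDiffOn ℝ (⊤ : ℕ∞) ξ₂ (I ×ˢ J))
    (h1 : ∀ z ∈ I ×ˢ J, ξ₁ z * z.2 + ξ₂ z * z.1 = 0)
    (h2 : ∀ z ∈ I ×ˢ J, fderiv ℝ ξ₂ z (1, 0) = 0)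
    (h3 : ∀ z ∈ I ×ˢ J, fderiv ℝ ξ₁ z (0, 1) = 0)
    (h4 : ∀ z ∈ I ×ˢ J,
      ξ₁ z + z.1 * fderiv ℝ ξ₁ z (1, 0) + z.1 * fderiv ℝ ξ₂ z (0, 1) = 0) :
    ∀ z ∈ I ×ˢ J, ξ₁ z = 0 ∧ ξ₂ z = 0 := by
  have hΩ : IsOpen (I ×ˢ J) := hIopen.prod hJopen
  -- key: ∂₁ξ₁ = 0 and ξ₂ = 0 on Ω
  have key : ∀ z ∈ I ×ˢ J, fderiv ℝ ξ₁ z (1, 0) = 0 ∧ ξ₂ z = 0 := by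
    intro z hz
    have hz1 : z.1 ≠ 0 := fun h => hI0 (h ▸ hz.1)
    have d1 : DifferentiableAt ℝ ξ₁ z :=
      (hξ₁.contDiffAt (hΩ.mem_nhds hz)).differentiableAt (by simp)
    have d2 : DifferentiableAt ℝ ξ₂ z :=
      (hξ₂.contDiffAt (hΩ.mem_nhds hz)).differentiableAt (by simp)
    have hF : HasFDerivAt (fun w : ℝ × ℝ => ξ₁ w * w.2 + ξ₂ w * w.1)
        ((ξ₁ z • ContinuousLinearMap.snd ℝ ℝ ℝ + z.2 • fderiv ℝ ξ₁ z) +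
         (ξ₂ z • ContinuousLinearMap.fst ℝ ℝ ℝ + z.1 • fderiv ℝ ξ₂ z)) z :=
      (d1.hasFDerivAt.mul (hasFDerivAt_snd)).add (d2.hasFDerivAt.mul (hasFDerivAt_fst))
    have hF0 : HasFDerivAt (fun w : ℝ × ℝ => ξ₁ w * w.2 + ξ₂ w * w.1)
        (0 : ℝ × ℝ →L[ℝ] ℝ) z := by
      refine (hasFDerivAt_const (0 : ℝ) z).congr_of_eventuallyEq ?_
      filter_upwards [hΩ.mem_nhds hz] with w hw using h1 w hw
    have hD := hF.unique hF0
    have e1 : ξ₁ z * 0 + z.2 * fderiv ℝ ξ₁ z (1, 0) +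
        (ξ₂ z * 1 + z.1 * fderiv ℝ ξ₂ z (1, 0)) = 0 := by
      have := congrArg (fun L : ℝ × ℝ →L[ℝ] ℝ => L (1, 0)) hD
      simpa using this
    have e2 : ξ₁ z * 1 + z.2 * fderiv ℝ ξ₁ z (0, 1) +
        (ξ₂ z * 0 + z.1 * fderiv ℝ ξ₂ z (0, 1)) = 0 := by
      have := congrArg (fun L : ℝ × ℝ →L[ℝ] ℝ => L (0, 1)) hD
      simpa using this
    rw [h2 z hz] at e1
    rw [h3 z hz] at e2
    -- e2 : ξ₁ z + z.1 * ∂₂ξ₂ = 0 ; h4 : ξ₁ z + z.1*∂₁ξ₁ + z.1*∂₂ξ₂ = 0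
    have h4' := h4 z hz
    have hd11 : fderiv ℝ ξ₁ z (1, 0) = 0 := by
      have : z.1 * fderiv ℝ ξ₁ z (1, 0) = 0 := by linarith
      exact (mul_eq_zero.mp this).resolve_left hz1
    refine ⟨hd11, ?_⟩
    rw [hd11] at e1
    linarith
  intro z hz
  have hz1 : z.1 ≠ 0 := fun h => hI0 (h ▸ hz.1)
  have hξ₂0 : fderiv ℝ ξ₂ z = 0 := by
    have heq : ξ₂ =ᶠ[nhds z] (fun _ => 0) := by
      filter_upwards [hΩ.mem_nhds hz] with w hw using (key w hw).2
    rw [heq.fderiv_eq, fderiv_fun_const]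
    rfl
  have h4' := h4 z hz
  rw [(key z hz).1, hξ₂0] at h4'
  simp at h4'
  exact ⟨h4', (key z hz).2⟩
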